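/- Let T, μ > 0, f ∈ C⁰([0,T]), and let h, v : [0,T]×[0,1] → ℝ with h > 0 satisfy, with u := ln h, the interior momentum equation v_t = μ v_{xx} + μ u_x v_x + f − v v_x − h_x on [0,T]×(0,1) (equivalent to the viscous Saint-Venant system with L = g = 1). Assume v[0] is four times and h[0], u[0] three times continuously differentiable in x, and v_{tt} is continuous on [0,T]×[0,1]. Let n ≥ 2 be an integer, δx = 1/n, δt ∈ (0,T), set h_i = h(0, iδx), v_i = v(0, iδx), and for i = 1,…,n−1 define v_i⁺ = (1 − 2δtμ/δx²)v_i + (δtμ/δx²)(v_{i+1} + v_{i−1}) + (δtμ/(4δx²))(v_{i+1} − v_{i−1}) ln(h_{i+1}/h_{i−1}) − (δt/(2δx))(v_i(v_{i+1} − v_{i−1}) + h_{i+1} − h_{i−1}) + f(0) δt. Then for all i = 1,…,n−1: |v(δt, iδx) − v_i⁺| ≤ S̄ δt (δx² + δt), where S̄ := (1/2)(max_{0≤s≤T} ‖v_{tt}[s]‖_∞ + ‖v[0]‖_∞ ‖v_{xxx}[0]‖_∞ + ‖h_{xxx}[0]‖_∞) + (μ/2)(‖v_x[0]‖_∞ ‖u_{xxx}[0]‖_∞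 + ‖u_x[0]‖_∞ ‖v_{xxx}[0]‖_∞ + ‖v_{xxxx}[0]‖_∞). -/

import Mathlib

open Set

/-- The explicit finite-difference update of the liquid velocity at interior
mesh points (scheme (6.2)), using the input value `fd = f(0)`. -/
noncomputable def vPlusInterior (δt δx μ fd : ℝ) (hh vv : ℕ → ℝ) (i : ℕ) : ℝ :=
  (1 - 2 * δt * μ / δx ^ 2) * vv i + δt * μ / δx ^ 2 * (vv (i + 1) + vv (i - 1))
    + δt * μ / (4 * δx ^ 2) * (vv (i + 1) - vv (i - 1)) * Real.log (hh (i + 1) / hh (i - 1))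
    - δt / (2 * δx) * (vv i * (vv (i + 1) - vv (i - 1)) + hh (i + 1) - hh (i - 1))
    + fd * δt

/-- Supremum norm over the spatial interval `[0,1]`. -/
noncomputable def supSeg (f : ℝ → ℝ) : ℝ := sSup ((fun x => |f x|) '' Icc (0:ℝ) 1)

/-- Supremum norm over the space-time rectangle `[0,T] × [0,1]`. -/
noncomputable def supRect (T : ℝ) (f : ℝ → ℝ → ℝ) : ℝ :=
  sSup ((fun p : ℝ × ℝ => |f p.1 p.2|) '' (Icc 0 T ×ˢ Icc (0:ℝ) 1))


lemma bound_right {a b C : ℝ} {k : ℕ} {g g' : ℝ → ℝ}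
    (hg : ∀ t ∈ Icc a b, HasDerivWithinAt g (g' t) (Icc a b) t)
    (hga : g a = 0)
    (hb : ∀ t ∈ Icc a b, |g' t| ≤ C * (t - a) ^ k) :
    ∀ t ∈ Icc a b, |g t| ≤ C / (k + 1) * (t - a) ^ (k + 1) := by
  intro t ht
  have hk : ((k : ℝ) + 1) ≠ 0 := by positivity
  set φ : ℝ → ℝ := fun t => C / (k + 1) * (t - a) ^ (k + 1) with hφdef
  have hφ : ∀ s : ℝ, HasDerivAt φ (C * (s - a) ^ k) s := by
    intro s
    have h1 : HasDerivAt (fun t : ℝ => (t - a) ^ (k + 1))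
        ((k + 1 : ℕ) * (s - a) ^ k * 1) s :=
      (((hasDerivAt_id s).sub_const a).pow (k + 1)).congr_deriv (by norm_num)
    have := h1.const_mul (C / (k + 1))
    convert this using 1
    case e'_9 =>
      push_cast
      field_simp
    all_goals rfl
  have hφa : φ a = 0 := by simp [hφdef]
  have key : ∀ (σ : ℝ), σ = 1 ∨ σ = -1 → σ * g t ≤ φ t := by
    intro σ hσ
    have hF : ∀ s ∈ Icc a b, HasDerivWithinAt (fun s => φ s - σ * g s)
        (C * (s - a) ^ k - σ * g' s) (Icc a b) s := fun s hs =>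
      ((hφ s).hasDerivWithinAt).sub ((hg s hs).const_mul σ)
    have hmono : MonotoneOn (fun s => φ s - σ * g s) (Icc a b) := by
      apply monotoneOn_of_hasDerivWithinAt_nonneg (convex_Icc a b)
        (fun s hs => ((hF s hs).continuousWithinAt))
        (fun s hs => ((hF s (by rw [interior_Icc] at hs; exact Ioo_subset_Icc_self hs)).mono
          interior_subset))
      intro s hs
      rw [interior_Icc] at hs
      have h1 := hb s (Ioo_subset_Icc_self hs)
      have h2 : σ * g' s ≤ |g' s| := by
        rcases hσ with h | h <;> simp [h, le_abs_self, neg_abs_le, neg_le_abs]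
      linarith
    have := hmono (left_mem_Icc.mpr (ht.1.trans ht.2)) ht ht.1
    simp only [hφa, hga] at this
    linarith [this]
  have h1 := key 1 (Or.inl rfl)
  have h2 := key (-1) (Or.inr rfl)
  simp only [hφdef] at h1 h2
  rw [abs_le]
  constructor <;> linarith

lemma bound_left {a b C : ℝ} {k : ℕ} {g g' : ℝ → ℝ}
    (hg : ∀ t ∈ Icc a b, HasDerivWithinAt g (g' t) (Icc a b) t)
    (hgb : g b = 0)
    (hb : ∀ t ∈ Icc a b, |g' t| ≤ C * (b - t) ^ k) :
    ∀ t ∈ Icc a b, |g t| ≤ C / (k + 1) * (b - t) ^ (k + 1) := by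
  intro t ht
  have hk : ((k : ℝ) + 1) ≠ 0 := by positivity
  set φ : ℝ → ℝ := fun t => C / (k + 1) * (b - t) ^ (k + 1) with hφdef
  have hφ : ∀ s : ℝ, HasDerivAt φ (-(C * (b - s) ^ k)) s := by
    intro s
    have h1 : HasDerivAt (fun t : ℝ => (b - t) ^ (k + 1))
        ((k + 1 : ℕ) * (b - s) ^ k * (-1)) s :=
      (((hasDerivAt_id s).const_sub b).pow (k + 1)).congr_deriv (by norm_num)
    have := h1.const_mul (C / (k + 1))
    convert this using 1
    case e'_9 =>
      push_cast
      field_simp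
    all_goals rfl
  have hφb : φ b = 0 := by simp [hφdef]
  have key : ∀ (σ : ℝ), σ = 1 ∨ σ = -1 → σ * g t ≤ φ t := by
    intro σ hσ
    have hF : ∀ s ∈ Icc a b, HasDerivWithinAt (fun s => φ s - σ * g s)
        (-(C * (b - s) ^ k) - σ * g' s) (Icc a b) s := fun s hs =>
      ((hφ s).hasDerivWithinAt).sub ((hg s hs).const_mul σ)
    have hanti : AntitoneOn (fun s => φ s - σ * g s) (Icc a b) := by
      apply antitoneOn_of_hasDerivWithinAt_nonpos (convex_Icc a b)
        (fun s hs => ((hF s hs).continuousWithinAt))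
        (fun s hs => ((hF s (by rw [interior_Icc] at hs; exact Ioo_subset_Icc_self hs)).mono
          interior_subset))
      intro s hs
      rw [interior_Icc] at hs
      have h1 := hb s (Ioo_subset_Icc_self hs)
      have h2 : -|g' s| ≤ σ * g' s := by
        rcases hσ with h | h <;> simp [h, neg_abs_le, neg_le_abs, le_abs_self]
      linarith
    have := hanti ht (right_mem_Icc.mpr (ht.1.trans ht.2)) ht.2
    simp only [hφb, hgb] at this
    linarith [this]
  have h1 := key 1 (Or.inl rfl)
  have h2 := key (-1) (Or.inr rfl)
  simp only [hφdef] at h1 h2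
  rw [abs_le]
  constructor <;> linarith

lemma taylor1_right {a b M : ℝ} {f0 f1 : ℝ → ℝ}
    (h0 : ∀ t ∈ Icc a b, HasDerivWithinAt f0 (f1 t) (Icc a b) t)
    (hM : ∀ t ∈ Icc a b, |f1 t| ≤ M) :
    ∀ t ∈ Icc a b, |f0 t - f0 a| ≤ M * (t - a) := by
  intro t ht
  have := bound_right (k := 0) (C := M) (g' := f1)
    (fun s hs => (h0 s hs).sub_const (f0 a)) (by simp)
    (fun s hs => by simpa using hM s hs) t ht
  simpa using this

lemma taylor1_left {a b M : ℝ} {f0 f1 : ℝ → ℝ}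
    (h0 : ∀ t ∈ Icc a b, HasDerivWithinAt f0 (f1 t) (Icc a b) t)
    (hM : ∀ t ∈ Icc a b, |f1 t| ≤ M) :
    ∀ t ∈ Icc a b, |f0 t - f0 b| ≤ M * (b - t) := by
  intro t ht
  have := bound_left (k := 0) (C := M) (g' := f1)
    (fun s hs => (h0 s hs).sub_const (f0 b)) (by simp)
    (fun s hs => by simpa using hM s hs) t ht
  simpa using this

lemma taylor2_right {a b M : ℝ} {f0 f1 f2 : ℝ → ℝ}
    (h0 : ∀ t ∈ Icc a b, HasDerivWithinAt f0 (f1 t) (Icc a b) t)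
    (h1 : ∀ t ∈ Icc a b, HasDerivWithinAt f1 (f2 t) (Icc a b) t)
    (hM : ∀ t ∈ Icc a b, |f2 t| ≤ M) :
    ∀ t ∈ Icc a b, |f0 t - f0 a - (t - a) * f1 a| ≤ M / 2 * (t - a) ^ 2 := by
  intro t ht
  have hg : ∀ s ∈ Icc a b, HasDerivWithinAt (fun s => f0 s - f0 a - (s - a) * f1 a)
      (f1 s - f1 a) (Icc a b) s := by
    intro s hs
    have hl : HasDerivWithinAt (fun s : ℝ => (s - a) * f1 a) (f1 a) (Icc a b) s :=
      (((hasDerivWithinAt_id s _).sub_const a).mul_const (f1 a)).congr_deriv (by ring)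
    exact ((h0 s hs).sub_const (f0 a)).sub hl
  have := bound_right (k := 1) (C := M) hg (by simp)
    (fun s hs => by simpa using taylor1_right h1 hM s hs) t ht
  norm_num at this
  exact this

lemma taylor2_left {a b M : ℝ} {f0 f1 f2 : ℝ → ℝ}
    (h0 : ∀ t ∈ Icc a b, HasDerivWithinAt f0 (f1 t) (Icc a b) t)
    (h1 : ∀ t ∈ Icc a b, HasDerivWithinAt f1 (f2 t) (Icc a b) t)
    (hM : ∀ t ∈ Icc a b, |f2 t| ≤ M) :
    ∀ t ∈ Icc a b, |f0 t - f0 b - (t - b) * f1 b| ≤ M / 2 * (b - t) ^ 2 := by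
  intro t ht
  have hg : ∀ s ∈ Icc a b, HasDerivWithinAt (fun s => f0 s - f0 b - (s - b) * f1 b)
      (f1 s - f1 b) (Icc a b) s := by
    intro s hs
    have hl : HasDerivWithinAt (fun s : ℝ => (s - b) * f1 b) (f1 b) (Icc a b) s :=
      (((hasDerivWithinAt_id s _).sub_const b).mul_const (f1 b)).congr_deriv (by ring)
    exact ((h0 s hs).sub_const (f0 b)).sub hl
  have := bound_left (k := 1) (C := M) hg (by simp)
    (fun s hs => by simpa using taylor1_left h1 hM s hs) t ht
  norm_num at this
  exact this

lemma taylor3_right {a b M : ℝ} {f0 f1 f2 f3 : ℝ → ℝ}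
    (h0 : ∀ t ∈ Icc a b, HasDerivWithinAt f0 (f1 t) (Icc a b) t)
    (h1 : ∀ t ∈ Icc a b, HasDerivWithinAt f1 (f2 t) (Icc a b) t)
    (h2 : ∀ t ∈ Icc a b, HasDerivWithinAt f2 (f3 t) (Icc a b) t)
    (hM : ∀ t ∈ Icc a b, |f3 t| ≤ M) :
    ∀ t ∈ Icc a b, |f0 t - f0 a - (t - a) * f1 a - (t - a) ^ 2 * (f2 a / 2)|
      ≤ M / 6 * (t - a) ^ 3 := by
  intro t ht
  have hg : ∀ s ∈ Icc a b, HasDerivWithinAt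
      (fun s => f0 s - f0 a - (s - a) * f1 a - (s - a) ^ 2 * (f2 a / 2))
      (f1 s - f1 a - (s - a) * f2 a) (Icc a b) s := by
    intro s hs
    have hl : HasDerivWithinAt (fun s : ℝ => (s - a) * f1 a) (f1 a) (Icc a b) s :=
      (((hasDerivWithinAt_id s _).sub_const a).mul_const (f1 a)).congr_deriv (by ring)
    have hq : HasDerivWithinAt (fun s : ℝ => (s - a) ^ 2 * (f2 a / 2))
        ((s - a) * f2 a) (Icc a b) s :=
      ((((hasDerivWithinAt_id s _).sub_const a).pow 2).mul_const (f2 a / 2)).congr_deriv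
        (by push_cast [id_eq]; ring)
    exact (((h0 s hs).sub_const (f0 a)).sub hl).sub hq
  have := bound_right (k := 2) (C := M / 2) hg (by simp)
    (fun s hs => taylor2_right h1 h2 hM s hs) t ht
  norm_num at this
  convert this using 2
  norm_num
  ring

lemma taylor3_left {a b M : ℝ} {f0 f1 f2 f3 : ℝ → ℝ}
    (h0 : ∀ t ∈ Icc a b, HasDerivWithinAt f0 (f1 t) (Icc a b) t)
    (h1 : ∀ t ∈ Icc a b, HasDerivWithinAt f1 (f2 t) (Icc a b) t)
    (h2 : ∀ t ∈ Icc a b, HasDerivWithinAt f2 (f3 t) (Icc a b) t)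
    (hM : ∀ t ∈ Icc a b, |f3 t| ≤ M) :
    ∀ t ∈ Icc a b, |f0 t - f0 b - (t - b) * f1 b - (t - b) ^ 2 * (f2 b / 2)|
      ≤ M / 6 * (b - t) ^ 3 := by
  intro t ht
  have hg : ∀ s ∈ Icc a b, HasDerivWithinAt
      (fun s => f0 s - f0 b - (s - b) * f1 b - (s - b) ^ 2 * (f2 b / 2))
      (f1 s - f1 b - (s - b) * f2 b) (Icc a b) s := by
    intro s hs
    have hl : HasDerivWithinAt (fun s : ℝ => (s - b) * f1 b) (f1 b) (Icc a b) s :=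
      (((hasDerivWithinAt_id s _).sub_const b).mul_const (f1 b)).congr_deriv (by ring)
    have hq : HasDerivWithinAt (fun s : ℝ => (s - b) ^ 2 * (f2 b / 2))
        ((s - b) * f2 b) (Icc a b) s :=
      ((((hasDerivWithinAt_id s _).sub_const b).pow 2).mul_const (f2 b / 2)).congr_deriv
        (by push_cast [id_eq]; ring)
    exact (((h0 s hs).sub_const (f0 b)).sub hl).sub hq
  have := bound_left (k := 2) (C := M / 2) hg (by simp)
    (fun s hs => taylor2_left h1 h2 hM s hs) t ht
  norm_num at this
  convert this using 2
  norm_num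
  ring

lemma taylor4_right {a b M : ℝ} {f0 f1 f2 f3 f4 : ℝ → ℝ}
    (h0 : ∀ t ∈ Icc a b, HasDerivWithinAt f0 (f1 t) (Icc a b) t)
    (h1 : ∀ t ∈ Icc a b, HasDerivWithinAt f1 (f2 t) (Icc a b) t)
    (h2 : ∀ t ∈ Icc a b, HasDerivWithinAt f2 (f3 t) (Icc a b) t)
    (h3 : ∀ t ∈ Icc a b, HasDerivWithinAt f3 (f4 t) (Icc a b) t)
    (hM : ∀ t ∈ Icc a b, |f4 t| ≤ M) :
    ∀ t ∈ Icc a b, |f0 t - f0 a - (t - a) * f1 a - (t - a) ^ 2 * (f2 a / 2)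
        - (t - a) ^ 3 * (f3 a / 6)| ≤ M / 24 * (t - a) ^ 4 := by
  intro t ht
  have hg : ∀ s ∈ Icc a b, HasDerivWithinAt
      (fun s => f0 s - f0 a - (s - a) * f1 a - (s - a) ^ 2 * (f2 a / 2)
        - (s - a) ^ 3 * (f3 a / 6))
      (f1 s - f1 a - (s - a) * f2 a - (s - a) ^ 2 * (f3 a / 2)) (Icc a b) s := by
    intro s hs
    have hl : HasDerivWithinAt (fun s : ℝ => (s - a) * f1 a) (f1 a) (Icc a b) s :=
      (((hasDerivWithinAt_id s _).sub_const a).mul_const (f1 a)).congr_deriv (by ring)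
    have hq : HasDerivWithinAt (fun s : ℝ => (s - a) ^ 2 * (f2 a / 2))
        ((s - a) * f2 a) (Icc a b) s :=
      ((((hasDerivWithinAt_id s _).sub_const a).pow 2).mul_const (f2 a / 2)).congr_deriv
        (by push_cast [id_eq]; ring)
    have hc : HasDerivWithinAt (fun s : ℝ => (s - a) ^ 3 * (f3 a / 6))
        ((s - a) ^ 2 * (f3 a / 2)) (Icc a b) s :=
      ((((hasDerivWithinAt_id s _).sub_const a).pow 3).mul_const (f3 a / 6)).congr_deriv
        (by push_cast [id_eq]; ring)
    exact ((((h0 s hs).sub_const (f0 a)).sub hl).sub hq).sub hc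
  have := bound_right (k := 3) (C := M / 6) hg (by simp)
    (fun s hs => taylor3_right h1 h2 h3 hM s hs) t ht
  norm_num at this
  convert this using 2
  norm_num
  ring

lemma taylor4_left {a b M : ℝ} {f0 f1 f2 f3 f4 : ℝ → ℝ}
    (h0 : ∀ t ∈ Icc a b, HasDerivWithinAt f0 (f1 t) (Icc a b) t)
    (h1 : ∀ t ∈ Icc a b, HasDerivWithinAt f1 (f2 t) (Icc a b) t)
    (h2 : ∀ t ∈ Icc a b, HasDerivWithinAt f2 (f3 t) (Icc a b) t)
    (h3 : ∀ t ∈ Icc a b, HasDerivWithinAt f3 (f4 t) (Icc a b) t)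
    (hM : ∀ t ∈ Icc a b, |f4 t| ≤ M) :
    ∀ t ∈ Icc a b, |f0 t - f0 b - (t - b) * f1 b - (t - b) ^ 2 * (f2 b / 2)
        - (t - b) ^ 3 * (f3 b / 6)| ≤ M / 24 * (b - t) ^ 4 := by
  intro t ht
  have hg : ∀ s ∈ Icc a b, HasDerivWithinAt
      (fun s => f0 s - f0 b - (s - b) * f1 b - (s - b) ^ 2 * (f2 b / 2)
        - (s - b) ^ 3 * (f3 b / 6))
      (f1 s - f1 b - (s - b) * f2 b - (s - b) ^ 2 * (f3 b / 2)) (Icc a b) s := by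
    intro s hs
    have hl : HasDerivWithinAt (fun s : ℝ => (s - b) * f1 b) (f1 b) (Icc a b) s :=
      (((hasDerivWithinAt_id s _).sub_const b).mul_const (f1 b)).congr_deriv (by ring)
    have hq : HasDerivWithinAt (fun s : ℝ => (s - b) ^ 2 * (f2 b / 2))
        ((s - b) * f2 b) (Icc a b) s :=
      ((((hasDerivWithinAt_id s _).sub_const b).pow 2).mul_const (f2 b / 2)).congr_deriv
        (by push_cast [id_eq]; ring)
    have hc : HasDerivWithinAt (fun s : ℝ => (s - b) ^ 3 * (f3 b / 6))
        ((s - b) ^ 2 * (f3 b / 2)) (Icc a b) s :=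
      ((((hasDerivWithinAt_id s _).sub_const b).pow 3).mul_const (f3 b / 6)).congr_deriv
        (by push_cast [id_eq]; ring)
    exact ((((h0 s hs).sub_const (f0 b)).sub hl).sub hq).sub hc
  have := bound_left (k := 3) (C := M / 6) hg (by simp)
    (fun s hs => taylor3_left h1 h2 h3 hM s hs) t ht
  norm_num at this
  convert this using 2
  norm_num
  ring

lemma slope_bound {x δ M : ℝ} (hδ : 0 < δ) (hx1 : 0 ≤ x - δ) (hx2 : x + δ ≤ 1)
    {f0 f1 : ℝ → ℝ}
    (h0 : ∀ y ∈ Icc (0:ℝ) 1, HasDerivWithinAt f0 (f1 y) (Icc 0 1) y)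
    (hM : ∀ y ∈ Icc (0:ℝ) 1, |f1 y| ≤ M) :
    |(f0 (x + δ) - f0 (x - δ)) / (2 * δ)| ≤ M := by
  have hsubR : Icc x (x + δ) ⊆ Icc (0:ℝ) 1 := Icc_subset_Icc (by linarith) hx2
  have hsubL : Icc (x - δ) x ⊆ Icc (0:ℝ) 1 := Icc_subset_Icc hx1 (by linarith)
  have hR := taylor1_right (fun y hy => (h0 y (hsubR hy)).mono hsubR)
    (fun y hy => hM y (hsubR hy)) (x + δ) (right_mem_Icc.mpr (by linarith))
  have hL := taylor1_left (fun y hy => (h0 y (hsubL hy)).mono hsubL)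
    (fun y hy => hM y (hsubL hy)) (x - δ) (left_mem_Icc.mpr (by linarith))
  rw [show x + δ - x = δ by ring] at hR
  rw [show x - (x - δ) = δ by ring] at hL
  rw [abs_div, abs_of_pos (by linarith : (0:ℝ) < 2 * δ)]
  rw [div_le_iff₀ (by linarith : (0:ℝ) < 2 * δ)]
  calc |f0 (x + δ) - f0 (x - δ)|
      ≤ |f0 (x + δ) - f0 x| + |f0 (x - δ) - f0 x| := by
        have := abs_sub (f0 (x + δ) - f0 x) (f0 (x - δ) - f0 x)
        calc |f0 (x + δ) - f0 (x - δ)|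
            = |(f0 (x + δ) - f0 x) - (f0 (x - δ) - f0 x)| := by ring_nf
          _ ≤ _ := abs_sub _ _
    _ ≤ M * δ + M * δ := add_le_add hR hL
    _ = M * (2 * δ) := by ring

lemma central1 {x δ M : ℝ} (hδ : 0 < δ) (hx1 : 0 ≤ x - δ) (hx2 : x + δ ≤ 1)
    {f0 f1 f2 f3 : ℝ → ℝ}
    (h0 : ∀ y ∈ Icc (0:ℝ) 1, HasDerivWithinAt f0 (f1 y) (Icc 0 1) y)
    (h1 : ∀ y ∈ Icc (0:ℝ) 1, HasDerivWithinAt f1 (f2 y) (Icc 0 1) y)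
    (h2 : ∀ y ∈ Icc (0:ℝ) 1, HasDerivWithinAt f2 (f3 y) (Icc 0 1) y)
    (hM : ∀ y ∈ Icc (0:ℝ) 1, |f3 y| ≤ M) :
    |(f0 (x + δ) - f0 (x - δ)) / (2 * δ) - f1 x| ≤ M * δ ^ 2 / 6 := by
  have hsubR : Icc x (x + δ) ⊆ Icc (0:ℝ) 1 := Icc_subset_Icc (by linarith) hx2
  have hsubL : Icc (x - δ) x ⊆ Icc (0:ℝ) 1 := Icc_subset_Icc hx1 (by linarith)
  have hR := taylor3_right (fun y hy => (h0 y (hsubR hy)).mono hsubR)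
    (fun y hy => (h1 y (hsubR hy)).mono hsubR) (fun y hy => (h2 y (hsubR hy)).mono hsubR)
    (fun y hy => hM y (hsubR hy)) (x + δ) (right_mem_Icc.mpr (by linarith))
  have hL := taylor3_left (fun y hy => (h0 y (hsubL hy)).mono hsubL)
    (fun y hy => (h1 y (hsubL hy)).mono hsubL) (fun y hy => (h2 y (hsubL hy)).mono hsubL)
    (fun y hy => hM y (hsubL hy)) (x - δ) (left_mem_Icc.mpr (by linarith))
  rw [show x + δ - x = δ by ring] at hR
  rw [show x - δ - x = -δ by ring, show x - (x - δ) = δ by ring] at hL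
  have key : (f0 (x + δ) - f0 (x - δ)) / (2 * δ) - f1 x
      = ((f0 (x + δ) - f0 x - δ * f1 x - δ ^ 2 * (f2 x / 2))
        - (f0 (x - δ) - f0 x - (-δ) * f1 x - (-δ) ^ 2 * (f2 x / 2))) / (2 * δ) := by
    field_simp
    ring
  rw [key, abs_div, abs_of_pos (by linarith : (0:ℝ) < 2 * δ)]
  rw [div_le_iff₀ (by linarith : (0:ℝ) < 2 * δ)]
  calc |_ - _| ≤ M / 6 * δ ^ 3 + M / 6 * δ ^ 3 := (abs_sub _ _).trans (add_le_add hR hL)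
    _ = M * δ ^ 2 / 6 * (2 * δ) := by ring

lemma central2 {x δ M : ℝ} (hδ : 0 < δ) (hx1 : 0 ≤ x - δ) (hx2 : x + δ ≤ 1)
    {f0 f1 f2 f3 f4 : ℝ → ℝ}
    (h0 : ∀ y ∈ Icc (0:ℝ) 1, HasDerivWithinAt f0 (f1 y) (Icc 0 1) y)
    (h1 : ∀ y ∈ Icc (0:ℝ) 1, HasDerivWithinAt f1 (f2 y) (Icc 0 1) y)
    (h2 : ∀ y ∈ Icc (0:ℝ) 1, HasDerivWithinAt f2 (f3 y) (Icc 0 1) y)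
    (h3 : ∀ y ∈ Icc (0:ℝ) 1, HasDerivWithinAt f3 (f4 y) (Icc 0 1) y)
    (hM : ∀ y ∈ Icc (0:ℝ) 1, |f4 y| ≤ M) :
    |(f0 (x + δ) - 2 * f0 x + f0 (x - δ)) / δ ^ 2 - f2 x| ≤ M * δ ^ 2 / 12 := by
  have hsubR : Icc x (x + δ) ⊆ Icc (0:ℝ) 1 := Icc_subset_Icc (by linarith) hx2
  have hsubL : Icc (x - δ) x ⊆ Icc (0:ℝ) 1 := Icc_subset_Icc hx1 (by linarith)
  have hR := taylor4_right (fun y hy => (h0 y (hsubR hy)).mono hsubR)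
    (fun y hy => (h1 y (hsubR hy)).mono hsubR) (fun y hy => (h2 y (hsubR hy)).mono hsubR)
    (fun y hy => (h3 y (hsubR hy)).mono hsubR)
    (fun y hy => hM y (hsubR hy)) (x + δ) (right_mem_Icc.mpr (by linarith))
  have hL := taylor4_left (fun y hy => (h0 y (hsubL hy)).mono hsubL)
    (fun y hy => (h1 y (hsubL hy)).mono hsubL) (fun y hy => (h2 y (hsubL hy)).mono hsubL)
    (fun y hy => (h3 y (hsubL hy)).mono hsubL)
    (fun y hy => hM y (hsubL hy)) (x - δ) (left_mem_Icc.mpr (by linarith))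
  rw [show x + δ - x = δ by ring] at hR
  rw [show x - δ - x = -δ by ring, show x - (x - δ) = δ by ring] at hL
  have hδ2 : (0:ℝ) < δ ^ 2 := by positivity
  have key : (f0 (x + δ) - 2 * f0 x + f0 (x - δ)) / δ ^ 2 - f2 x
      = ((f0 (x + δ) - f0 x - δ * f1 x - δ ^ 2 * (f2 x / 2) - δ ^ 3 * (f3 x / 6))
        + (f0 (x - δ) - f0 x - (-δ) * f1 x - (-δ) ^ 2 * (f2 x / 2)
            - (-δ) ^ 3 * (f3 x / 6))) / δ ^ 2 := by
    field_simp
    ring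
  rw [key, abs_div, abs_of_pos hδ2, div_le_iff₀ hδ2]
  calc |_ + _| ≤ M / 24 * δ ^ 4 + M / 24 * δ ^ 4 := (abs_add_le _ _).trans (add_le_add hR hL)
    _ = M * δ ^ 2 / 12 * δ ^ 2 := by ring

lemma supSeg_ge {f : ℝ → ℝ} (hf : ContinuousOn f (Icc 0 1)) :
    ∀ x ∈ Icc (0:ℝ) 1, |f x| ≤ supSeg f := fun x hx =>
  le_csSup (isCompact_Icc.bddAbove_image (continuous_abs.comp_continuousOn hf)) ⟨x, hx, rfl⟩

lemma supSeg_nonneg {f : ℝ → ℝ} (hf : ContinuousOn f (Icc 0 1)) : 0 ≤ supSeg f :=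
  (abs_nonneg _).trans (supSeg_ge hf 0 ⟨le_rfl, zero_le_one⟩)

lemma supRect_ge {T : ℝ} {f : ℝ → ℝ → ℝ}
    (hf : ContinuousOn (fun p : ℝ × ℝ => f p.1 p.2) (Icc 0 T ×ˢ Icc (0:ℝ) 1)) :
    ∀ t ∈ Icc 0 T, ∀ x ∈ Icc (0:ℝ) 1, |f t x| ≤ supRect T f := fun t ht x hx =>
  le_csSup ((isCompact_Icc.prod isCompact_Icc).bddAbove_image
    (continuous_abs.comp_continuousOn hf)) ⟨(t, x), mk_mem_prod ht hx, rfl⟩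

lemma supRect_nonneg {T : ℝ} {f : ℝ → ℝ → ℝ} (hT : 0 ≤ T)
    (hf : ContinuousOn (fun p : ℝ × ℝ => f p.1 p.2) (Icc 0 T ×ˢ Icc (0:ℝ) 1)) :
    0 ≤ supRect T f :=
  (abs_nonneg _).trans (supRect_ge hf 0 ⟨le_rfl, hT⟩ 0 ⟨le_rfl, zero_le_one⟩)

set_option maxHeartbeats 2000000 in
/-- one-step consistency of the interior liquid-velocity scheme
for the momentum equation `v_t = μ v_xx + μ u_x v_x + f − v v_x − h_x`
(with `u = ln h`, i.e. the viscous Saint-Venant system with `L = g = 1`).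
Here `vt, vx, vxx, vtt, ux, hx` denote the corresponding partial derivatives
(one-sided at the boundary of `[0,T] × [0,1]`), while `v3, v4` are the third
and fourth spatial derivatives of `v(0,·)`, `h3` the third spatial derivative
of `h(0,·)` and `u3` the third spatial derivative of `u(0,·)`. -/
theorem velocity_scheme_consistency
    (T μ : ℝ) (hT : 0 < T) (hμ : 0 < μ)
    (f : ℝ → ℝ) (f_cont : ContinuousOn f (Icc 0 T))
    (h v u : ℝ → ℝ → ℝ)
    (hu : ∀ t x, u t x = Real.log (h t x))
    (vt vx vxx vtt ux hx : ℝ → ℝ → ℝ)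
    (vxx0 v3 v4 hxx0 h3 uxx0 u3 : ℝ → ℝ)
    (h_pos : ∀ t ∈ Icc 0 T, ∀ x ∈ Icc (0:ℝ) 1, 0 < h t x)
    (vt_spec : ∀ t ∈ Icc 0 T, ∀ x ∈ Icc (0:ℝ) 1,
      HasDerivWithinAt (fun s => v s x) (vt t x) (Icc 0 T) t)
    (vtt_spec : ∀ t ∈ Icc 0 T, ∀ x ∈ Icc (0:ℝ) 1,
      HasDerivWithinAt (fun s => vt s x) (vtt t x) (Icc 0 T) t)
    (vx_spec : ∀ t ∈ Icc 0 T, ∀ x ∈ Icc (0:ℝ) 1,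
      HasDerivWithinAt (fun y => v t y) (vx t x) (Icc 0 1) x)
    (vxx_spec : ∀ t ∈ Icc 0 T, ∀ x ∈ Icc (0:ℝ) 1,
      HasDerivWithinAt (fun y => vx t y) (vxx t x) (Icc 0 1) x)
    (ux_spec : ∀ t ∈ Icc 0 T, ∀ x ∈ Icc (0:ℝ) 1,
      HasDerivWithinAt (fun y => u t y) (ux t x) (Icc 0 1) x)
    (hx_spec : ∀ t ∈ Icc 0 T, ∀ x ∈ Icc (0:ℝ) 1,
      HasDerivWithinAt (fun y => h t y) (hx t x) (Icc 0 1) x)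
    (vxx0_spec : ∀ x ∈ Icc (0:ℝ) 1, HasDerivWithinAt (fun y => vx 0 y) (vxx0 x) (Icc 0 1) x)
    (v3_spec : ∀ x ∈ Icc (0:ℝ) 1, HasDerivWithinAt vxx0 (v3 x) (Icc 0 1) x)
    (v4_spec : ∀ x ∈ Icc (0:ℝ) 1, HasDerivWithinAt v3 (v4 x) (Icc 0 1) x)
    (hxx0_spec : ∀ x ∈ Icc (0:ℝ) 1, HasDerivWithinAt (fun y => hx 0 y) (hxx0 x) (Icc 0 1) x)
    (h3_spec : ∀ x ∈ Icc (0:ℝ) 1, HasDerivWithinAt hxx0 (h3 x) (Icc 0 1) x)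
    (uxx0_spec : ∀ x ∈ Icc (0:ℝ) 1, HasDerivWithinAt (fun y => ux 0 y) (uxx0 x) (Icc 0 1) x)
    (u3_spec : ∀ x ∈ Icc (0:ℝ) 1, HasDerivWithinAt uxx0 (u3 x) (Icc 0 1) x)
    (v_cont : ContinuousOn (fun p : ℝ × ℝ => v p.1 p.2) (Icc 0 T ×ˢ Icc (0:ℝ) 1))
    (vtt_cont : ContinuousOn (fun p : ℝ × ℝ => vtt p.1 p.2) (Icc 0 T ×ˢ Icc (0:ℝ) 1))
    (v3_cont : ContinuousOn v3 (Icc (0:ℝ) 1))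
    (v4_cont : ContinuousOn v4 (Icc (0:ℝ) 1))
    (h3_cont : ContinuousOn h3 (Icc (0:ℝ) 1))
    (u3_cont : ContinuousOn u3 (Icc (0:ℝ) 1))
    (pde : ∀ t ∈ Icc 0 T, ∀ x ∈ Ioo (0:ℝ) 1,
      vt t x = μ * vxx t x + μ * ux t x * vx t x + f t - v t x * vx t x - hx t x)
    (n : ℕ) (hn : 2 ≤ n) (δt : ℝ) (hδt : δt ∈ Ioo 0 T) :
    ∀ i, 1 ≤ i → i ≤ n - 1 →
      |v δt (i * ((1:ℝ) / n))
        - vPlusInterior δt ((1:ℝ) / n) μ (f 0)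
            (fun j => h 0 (j * ((1:ℝ) / n))) (fun j => v 0 (j * ((1:ℝ) / n))) i| ≤
      (1 / 2 * (supRect T vtt + supSeg (v 0) * supSeg v3 + supSeg h3)
        + μ / 2 * (supSeg (vx 0) * supSeg u3 + supSeg (ux 0) * supSeg v3 + supSeg v4))
        * δt * (((1:ℝ) / n) ^ 2 + δt) := by
  intro i hi1 hi2
  have hn0 : 0 < n := by omega
  have hn0' : (0:ℝ) < n := by exact_mod_cast hn0
  set δx : ℝ := 1 / (n:ℝ) with hδxdef
  have hδx : 0 < δx := by positivity
  set x : ℝ := (i:ℝ) * δx with hxdef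
  have hi1' : (1:ℝ) ≤ (i:ℝ) := by exact_mod_cast hi1
  have hin : i + 1 ≤ n := by omega
  have hin' : (i:ℝ) + 1 ≤ (n:ℝ) := by exact_mod_cast hin
  have hnδx : (n:ℝ) * δx = 1 := by rw [hδxdef]; field_simp
  have hxm : 0 ≤ x - δx := by
    have h1 : 0 ≤ ((i:ℝ) - 1) * δx := mul_nonneg (by linarith) hδx.le
    have h2 : x - δx = ((i:ℝ) - 1) * δx := by rw [hxdef]; ring
    linarith
  have hxp : x + δx ≤ 1 := by
    have h1 : ((i:ℝ) + 1) * δx ≤ (n:ℝ) * δx := mul_le_mul_of_nonneg_right hin' hδx.le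
    have h2 : x + δx = ((i:ℝ) + 1) * δx := by rw [hxdef]; ring
    linarith
  have hx01 : x ∈ Icc (0:ℝ) 1 := ⟨by linarith, by linarith⟩
  have hxIoo : x ∈ Ioo (0:ℝ) 1 := ⟨by linarith, by linarith⟩
  have hxpm : x + δx ∈ Icc (0:ℝ) 1 := ⟨by linarith, hxp⟩
  have hxmm : x - δx ∈ Icc (0:ℝ) 1 := ⟨hxm, by linarith⟩
  have h0T : (0:ℝ) ∈ Icc (0:ℝ) T := ⟨le_rfl, hT.le⟩
  -- index casts
  have hip : ((i + 1 : ℕ) : ℝ) * δx = x + δx := by push_cast; rw [hxdef]; ring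
  have him : ((i - 1 : ℕ) : ℝ) * δx = x - δx := by
    rw [Nat.cast_sub hi1]; push_cast; rw [hxdef]; ring
  -- spatial derivatives at time 0
  have Dv0 : ∀ y ∈ Icc (0:ℝ) 1, HasDerivWithinAt (fun y => v 0 y) (vx 0 y) (Icc 0 1) y :=
    fun y hy => vx_spec 0 h0T y hy
  have Dh0 : ∀ y ∈ Icc (0:ℝ) 1, HasDerivWithinAt (fun y => h 0 y) (hx 0 y) (Icc 0 1) y :=
    fun y hy => hx_spec 0 h0T y hy
  have Du0 : ∀ y ∈ Icc (0:ℝ) 1, HasDerivWithinAt (fun y => u 0 y) (ux 0 y) (Icc 0 1) y :=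
    fun y hy => ux_spec 0 h0T y hy
  -- continuity facts
  have cv0 : ContinuousOn (fun y => v 0 y) (Icc (0:ℝ) 1) := by
    have hmap : ∀ y ∈ Icc (0:ℝ) 1, ((0:ℝ), y) ∈ Icc (0:ℝ) T ×ˢ Icc (0:ℝ) 1 :=
      fun y hy => mk_mem_prod h0T hy
    exact v_cont.comp ((continuous_const.prodMk continuous_id).continuousOn) hmap
  have cvx : ContinuousOn (fun y => vx 0 y) (Icc (0:ℝ) 1) :=
    fun y hy => (vxx0_spec y hy).continuousWithinAt
  have cux : ContinuousOn (fun y => ux 0 y) (Icc (0:ℝ) 1) :=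
    fun y hy => (uxx0_spec y hy).continuousWithinAt
  -- sup norms
  have hMtt0 : 0 ≤ supRect T vtt := supRect_nonneg hT.le vtt_cont
  have hMv00 : 0 ≤ supSeg (v 0) := supSeg_nonneg cv0
  have hMv30 : 0 ≤ supSeg v3 := supSeg_nonneg v3_cont
  have hMv40 : 0 ≤ supSeg v4 := supSeg_nonneg v4_cont
  have hMh30 : 0 ≤ supSeg h3 := supSeg_nonneg h3_cont
  have hMu30 : 0 ≤ supSeg u3 := supSeg_nonneg u3_cont
  have hMvx0 : 0 ≤ supSeg (vx 0) := supSeg_nonneg cvx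
  have hMux0 : 0 ≤ supSeg (ux 0) := supSeg_nonneg cux
  have hbv3 : ∀ y ∈ Icc (0:ℝ) 1, |v3 y| ≤ supSeg v3 := supSeg_ge v3_cont
  have hbv4 : ∀ y ∈ Icc (0:ℝ) 1, |v4 y| ≤ supSeg v4 := supSeg_ge v4_cont
  have hbh3 : ∀ y ∈ Icc (0:ℝ) 1, |h3 y| ≤ supSeg h3 := supSeg_ge h3_cont
  have hbu3 : ∀ y ∈ Icc (0:ℝ) 1, |u3 y| ≤ supSeg u3 := supSeg_ge u3_cont
  have hbux : ∀ y ∈ Icc (0:ℝ) 1, |ux 0 y| ≤ supSeg (ux 0) := supSeg_ge cux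
  -- time Taylor expansion
  have hsubT : Icc (0:ℝ) δt ⊆ Icc (0:ℝ) T := Icc_subset_Icc le_rfl hδt.2.le
  have hTt := taylor2_right (f0 := fun s => v s x) (f1 := fun s => vt s x)
    (f2 := fun s => vtt s x)
    (fun s hs => (vt_spec s (hsubT hs) x hx01).mono hsubT)
    (fun s hs => (vtt_spec s (hsubT hs) x hx01).mono hsubT)
    (fun s hs => supRect_ge vtt_cont s (hsubT hs) x hx01)
    δt (right_mem_Icc.mpr hδt.1.le)
  simp only [sub_zero] at hTt
  -- spatial difference bounds
  have hB2 := central2 hδx hxm hxp Dv0 vxx0_spec v3_spec v4_spec hbv4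
  have hB3 := central1 hδx hxm hxp Dv0 vxx0_spec v3_spec hbv3
  have hB4 := central1 hδx hxm hxp Dh0 hxx0_spec h3_spec hbh3
  have hB5 := central1 hδx hxm hxp Du0 uxx0_spec u3_spec hbu3
  have hB6 := slope_bound hδx hxm hxp Du0 hbux
  have hB7 := supSeg_ge cvx x hx01
  have hB8 := supSeg_ge cv0 x hx01
  -- identify vxx0 with vxx 0
  have hUD : UniqueDiffWithinAt ℝ (Icc (0:ℝ) 1) x := (uniqueDiffOn_Icc zero_lt_one) x hx01
  have hvxx : vxx0 x = vxx 0 x := by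
    rw [← (vxx0_spec x hx01).derivWithin hUD, ← (vxx_spec 0 h0T x hx01).derivWithin hUD]
  have hpde : vt 0 x = μ * vxx0 x + μ * ux 0 x * vx 0 x + f 0 - v 0 x * vx 0 x - hx 0 x := by
    rw [hvxx]; exact pde 0 h0T x hxIoo
  -- abbreviations for the difference quotients
  set D2 : ℝ := (v 0 (x + δx) - 2 * v 0 x + v 0 (x - δx)) / δx ^ 2 with hD2def
  set Dv : ℝ := (v 0 (x + δx) - v 0 (x - δx)) / (2 * δx) with hDvdef
  set Du : ℝ := (u 0 (x + δx) - u 0 (x - δx)) / (2 * δx) with hDudef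
  set Dh : ℝ := (h 0 (x + δx) - h 0 (x - δx)) / (2 * δx) with hDhdef
  have hlog : Real.log (h 0 (x + δx) / h 0 (x - δx)) = u 0 (x + δx) - u 0 (x - δx) := by
    rw [Real.log_div (h_pos 0 h0T _ hxpm).ne' (h_pos 0 h0T _ hxmm).ne', hu, hu]
  have hscheme : vPlusInterior δt δx μ (f 0) (fun j => h 0 (j * δx)) (fun j => v 0 (j * δx)) i
      = v 0 x + δt * (μ * D2 + μ * Dv * Du + f 0 - v 0 x * Dv - Dh) := by
    simp only [vPlusInterior, hip, him, hlog, hD2def, hDvdef, hDudef, hDhdef, ← hxdef]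
    field_simp
    ring
  have hdiff : v δt x - vPlusInterior δt δx μ (f 0)
        (fun j => h 0 (j * δx)) (fun j => v 0 (j * δx)) i
      = (v δt x - v 0 x - δt * vt 0 x)
        + δt * (μ * (vxx0 x - D2)
          + μ * ((ux 0 x - Du) * vx 0 x + Du * (vx 0 x - Dv))
          + v 0 x * (Dv - vx 0 x) + (Dh - hx 0 x)) := by
    rw [hscheme, hpde]; ring
  -- error bounds
  have e1 : |vxx0 x - D2| ≤ supSeg v4 * δx ^ 2 / 12 := by rw [abs_sub_comm]; exact hB2
  have e2 : |ux 0 x - Du| ≤ supSeg u3 * δx ^ 2 / 6 := by rw [abs_sub_comm]; exact hB5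
  have e3 : |vx 0 x - Dv| ≤ supSeg v3 * δx ^ 2 / 6 := by rw [abs_sub_comm]; exact hB3
  have e4 : |Dv - vx 0 x| ≤ supSeg v3 * δx ^ 2 / 6 := hB3
  have e5 : |Dh - hx 0 x| ≤ supSeg h3 * δx ^ 2 / 6 := hB4
  have t1 : |μ * (vxx0 x - D2)| ≤ μ * (supSeg v4 * δx ^ 2 / 12) := by
    rw [abs_mul, abs_of_pos hμ]; exact mul_le_mul_of_nonneg_left e1 hμ.le
  have t2 : |(ux 0 x - Du) * vx 0 x| ≤ supSeg u3 * δx ^ 2 / 6 * supSeg (vx 0) := by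
    rw [abs_mul]; exact mul_le_mul e2 hB7 (abs_nonneg _) (by positivity)
  have t3 : |Du * (vx 0 x - Dv)| ≤ supSeg (ux 0) * (supSeg v3 * δx ^ 2 / 6) := by
    rw [abs_mul]; exact mul_le_mul hB6 e3 (abs_nonneg _) hMux0
  have t4 : |μ * ((ux 0 x - Du) * vx 0 x + Du * (vx 0 x - Dv))|
      ≤ μ * (supSeg u3 * δx ^ 2 / 6 * supSeg (vx 0) + supSeg (ux 0) * (supSeg v3 * δx ^ 2 / 6)) := by
    rw [abs_mul, abs_of_pos hμ]
    exact mul_le_mul_of_nonneg_left ((abs_add_le _ _).trans (add_le_add t2 t3)) hμ.le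
  have t5 : |v 0 x * (Dv - vx 0 x)| ≤ supSeg (v 0) * (supSeg v3 * δx ^ 2 / 6) := by
    rw [abs_mul]; exact mul_le_mul hB8 e4 (abs_nonneg _) hMv00
  have hBtot : |μ * (vxx0 x - D2)
      + μ * ((ux 0 x - Du) * vx 0 x + Du * (vx 0 x - Dv))
      + v 0 x * (Dv - vx 0 x) + (Dh - hx 0 x)|
      ≤ μ * (supSeg v4 * δx ^ 2 / 12)
        + μ * (supSeg u3 * δx ^ 2 / 6 * supSeg (vx 0) + supSeg (ux 0) * (supSeg v3 * δx ^ 2 / 6))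
        + supSeg (v 0) * (supSeg v3 * δx ^ 2 / 6) + supSeg h3 * δx ^ 2 / 6 :=
    (abs_add_le _ _).trans (add_le_add ((abs_add_le _ _).trans (add_le_add
      ((abs_add_le _ _).trans (add_le_add t1 t4)) t5)) e5)
  -- combine
  have hfinal : |v δt x - vPlusInterior δt δx μ (f 0)
        (fun j => h 0 (j * δx)) (fun j => v 0 (j * δx)) i|
      ≤ supRect T vtt / 2 * δt ^ 2
        + δt * (μ * (supSeg v4 * δx ^ 2 / 12)
          + μ * (supSeg u3 * δx ^ 2 / 6 * supSeg (vx 0)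
            + supSeg (ux 0) * (supSeg v3 * δx ^ 2 / 6))
          + supSeg (v 0) * (supSeg v3 * δx ^ 2 / 6) + supSeg h3 * δx ^ 2 / 6) := by
    rw [hdiff]
    refine (abs_add_le _ _).trans (add_le_add hTt ?_)
    rw [abs_mul, abs_of_pos hδt.1]
    exact mul_le_mul_of_nonneg_left hBtot hδt.1.le
  refine hfinal.trans ?_
  set Sb : ℝ := 1 / 2 * (supRect T vtt + supSeg (v 0) * supSeg v3 + supSeg h3)
    + μ / 2 * (supSeg (vx 0) * supSeg u3 + supSeg (ux 0) * supSeg v3 + supSeg v4) with hSbdef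
  set c : ℝ := μ * supSeg v4 / 12 + μ * (supSeg u3 * supSeg (vx 0) / 6
    + supSeg (ux 0) * supSeg v3 / 6) + supSeg (v 0) * supSeg v3 / 6 + supSeg h3 / 6 with hcdef
  have p1 : 0 ≤ μ * supSeg v4 := by positivity
  have p2 : 0 ≤ μ * (supSeg (vx 0) * supSeg u3) := by positivity
  have p3 : 0 ≤ μ * (supSeg (ux 0) * supSeg v3) := by positivity
  have p4 : 0 ≤ supSeg (v 0) * supSeg v3 := by positivity
  have hSc : c ≤ Sb := by rw [hcdef, hSbdef]; linarith only [p1, p2, p3, p4, hMtt0, hMh30]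
  have hSm : supRect T vtt / 2 ≤ Sb := by rw [hSbdef]; linarith only [p1, p2, p3, p4, hMh30, hMtt0]
  have hrw : μ * (supSeg v4 * δx ^ 2 / 12)
      + μ * (supSeg u3 * δx ^ 2 / 6 * supSeg (vx 0) + supSeg (ux 0) * (supSeg v3 * δx ^ 2 / 6))
      + supSeg (v 0) * (supSeg v3 * δx ^ 2 / 6) + supSeg h3 * δx ^ 2 / 6 = c * δx ^ 2 := by
    rw [hcdef]; ring
  rw [hrw]
  have step1 : supRect T vtt / 2 * δt ^ 2 ≤ Sb * δt ^ 2 :=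
    mul_le_mul_of_nonneg_right hSm (sq_nonneg δt)
  have step2 : δt * (c * δx ^ 2) ≤ δt * (Sb * δx ^ 2) :=
    mul_le_mul_of_nonneg_left (mul_le_mul_of_nonneg_right hSc (sq_nonneg δx)) hδt.1.le
  have hfin : Sb * δt * (δx ^ 2 + δt) = Sb * δt ^ 2 + δt * (Sb * δx ^ 2) := by ring
  calc supRect T vtt / 2 * δt ^ 2 + δt * (c * δx ^ 2)
      ≤ Sb * δt ^ 2 + δt * (Sb * δx ^ 2) := add_le_add step1 step2
    _ = Sb * δt * (δx ^ 2 + δt) := hfin.symm
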